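/- Let G be a finite connected graph with oriented edges and incidence matrix M. A set A of |V|−1 edges is a spanning tree of G if and only if the columns of M indexed by A, restricted to rows V ∖ {x₀} for any fixed vertex x₀, form an invertible matrix; moreover, in that case the determinant of this matrix is ±1. -/

import Mathlib

open Finset

private lemma sign_cast_real {n : ℕ} (σ : Equiv.Perm (Fin n)) :
    ((Equiv.Perm.sign σ : ℤ) : ℝ) = 1 ∨ ((Equiv.Perm.sign σ : ℤ) : ℝ) = -1 := by
  rcases Int.units_eq_one_or (Equiv.Perm.sign σ) with h | h <;> simp [h]

private lemma detTU : ∀ (n : ℕ) (B : Matrix (Fin n) (Fin n) ℝ),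
    (∀ i j, B i j = 0 ∨ B i j = 1 ∨ B i j = -1) →
    (∀ j i₁ i₂, B i₁ j = 1 → B i₂ j = 1 → i₁ = i₂) →
    (∀ j i₁ i₂, B i₁ j = -1 → B i₂ j = -1 → i₁ = i₂) →
    B.det = 0 ∨ B.det = 1 ∨ B.det = -1 := by
  intro n
  induction n with
  | zero => intro B _ _ _; right; left; exact Matrix.det_fin_zero
  | succ n ih =>
    intro B h0 h1 h2
    by_cases hz : ∃ j, ∀ i, B i j = 0
    · obtain ⟨j, hj⟩ := hz
      exact Or.inl (Matrix.det_eq_zero_of_column_eq_zero j hj)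
    by_cases hs : ∃ j i, B i j ≠ 0 ∧ ∀ i', B i' j ≠ 0 → i' = i
    · obtain ⟨j, i, hij, huniq⟩ := hs
      set C : Matrix (Fin (n+1)) (Fin (n+1)) ℝ :=
        B.submatrix (Equiv.swap 0 i) (Equiv.swap 0 j) with hCdef
      have hC00 : C 0 0 = B i j := by
        simp [hCdef, Matrix.submatrix_apply, Equiv.swap_apply_left]
      have hCcol : ∀ i' : Fin (n+1), i' ≠ 0 → C i' 0 = 0 := by
        intro i' hi'
        by_contra hne
        have h' : Equiv.swap 0 i i' = i := by
          apply huniq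
          simpa [hCdef, Matrix.submatrix_apply, Equiv.swap_apply_left] using hne
        exact hi' ((Equiv.swap 0 i).injective (by rw [h', Equiv.swap_apply_left]))
      set D : Matrix (Fin n) (Fin n) ℝ := C.submatrix Fin.succ Fin.succ with hDdef
      have hdetC : C.det = B i j * D.det := by
        rw [Matrix.det_succ_column_zero, Finset.sum_eq_single 0]
        · simp [hC00, Fin.succAbove_zero, hDdef]
        · intro b _ hb; simp [hCcol b hb]
        · intro h; exact absurd (Finset.mem_univ 0) h
      have hD : D.det = 0 ∨ D.det = 1 ∨ D.det = -1 := by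
        apply ih
        · intro a b; exact h0 _ _
        · intro b a₁ a₂ ha₁ ha₂
          have := h1 (Equiv.swap 0 j b.succ) _ _ ha₁ ha₂
          exact Fin.succ_injective _ ((Equiv.swap 0 i).injective this)
        · intro b a₁ a₂ ha₁ ha₂
          have := h2 (Equiv.swap 0 j b.succ) _ _ ha₁ ha₂
          exact Fin.succ_injective _ ((Equiv.swap 0 i).injective this)
      have hBij : B i j = 1 ∨ B i j = -1 := by
        rcases h0 i j with h | h | h
        · exact absurd h hij
        · exact Or.inl h
        · exact Or.inr h
      have hCB : C.det = ((Equiv.Perm.sign (Equiv.swap 0 j) : ℤ) : ℝ) *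
          (((Equiv.Perm.sign (Equiv.swap 0 i) : ℤ) : ℝ) * B.det) := by
        have h1' : C = (B.submatrix (⇑(Equiv.swap 0 i)) id).submatrix id (⇑(Equiv.swap 0 j)) := by
          rw [Matrix.submatrix_submatrix]; rfl
        rw [h1', Matrix.det_permute', Matrix.det_permute]
      rcases sign_cast_real (Equiv.swap 0 i) with hi1 | hi1 <;>
      rcases sign_cast_real (Equiv.swap 0 j) with hj1 | hj1 <;>
      rcases hBij with hb | hb <;> rcases hD with hd | hd | hd <;>
      · rw [hi1, hj1] at hCB
        rw [hb, hd] at hdetC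
        first
          | (left; linarith)
          | (right; left; linarith)
          | (right; right; linarith)
    · push_neg at hz hs
      have hcol : ∀ j, ∑ i, B i j = 0 := by
        intro j
        obtain ⟨i₁, hi₁⟩ := hz j
        obtain ⟨i₂, hi₂, hne⟩ := hs j i₁ hi₁
        have key : (B i₁ j = 1 ∧ B i₂ j = -1) ∨ (B i₁ j = -1 ∧ B i₂ j = 1) := by
          rcases h0 i₁ j with h | h | h
          · exact absurd h hi₁
          · rcases h0 i₂ j with h' | h' | h'
            · exact absurd h' hi₂
            · exact absurd (h1 j i₂ i₁ h' h) hne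
            · exact Or.inl ⟨h, h'⟩
          · rcases h0 i₂ j with h' | h' | h'
            · exact absurd h' hi₂
            · exact Or.inr ⟨h, h'⟩
            · exact absurd (h2 j i₂ i₁ h' h) hne
        have hzero : ∀ c ∈ univ, c ≠ i₁ ∧ c ≠ i₂ → B c j = 0 := by
          rintro c _ ⟨hc1, hc2⟩
          rcases h0 c j with h | h | h
          · exact h
          · rcases key with ⟨k1, k2⟩ | ⟨k1, k2⟩
            · exact absurd (h1 j c i₁ h k1) hc1
            · exact absurd (h1 j c i₂ h k2) hc2
          · rcases key with ⟨k1, k2⟩ | ⟨k1, k2⟩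
            · exact absurd (h2 j c i₂ h k2) hc2
            · exact absurd (h2 j c i₁ h k1) hc1
        rw [Finset.sum_eq_add_of_mem i₁ i₂ (mem_univ _) (mem_univ _) (Ne.symm hne) hzero]
        rcases key with ⟨k1, k2⟩ | ⟨k1, k2⟩ <;> rw [k1, k2] <;> ring
      left
      rw [← Matrix.exists_vecMul_eq_zero_iff]
      refine ⟨fun _ => 1, ?_, ?_⟩
      · intro h
        have := congrFun h 0
        norm_num at this
      · funext j
        simp [Matrix.vecMul, dotProduct, hcol j]

private lemma walk_const {V : Type*} {H : SimpleGraph V} {f : V → ℝ}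
    (h : ∀ a b, H.Adj a b → f a = f b) : ∀ {a b : V}, H.Reachable a b → f a = f b := by
  intro a b hr
  obtain ⟨p⟩ := hr
  induction p with
  | nil => rfl
  | cons h' p ih => exact (h _ _ h').trans ih

theorem stmt18 {V : Type*} [Fintype V] [DecidableEq V]
    (G : SimpleGraph V) [DecidableRel G.Adj] (hG : G.Connected)
    [Fintype G.edgeSet]
    (head tail : G.edgeSet → V)
    (hor : ∀ e : G.edgeSet, (e : Sym2 V) = s(head e, tail e))
    (M : Matrix V G.edgeSet ℝ)
    (hM : ∀ x e, M x e = if x = head e then 1 else if x = tail e then -1 else 0)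
    (x₀ : V) (A : Finset G.edgeSet) (hA : A.card = Fintype.card V - 1)
    (σ : {v : V // v ≠ x₀} ≃ ↑A) :
    ((SimpleGraph.fromEdgeSet
        ((A.image (fun e : G.edgeSet => (e : Sym2 V)) : Finset (Sym2 V)) : Set (Sym2 V))).IsTree
      ↔ IsUnit (Matrix.of fun x y : {v : V // v ≠ x₀} => M (x : V) ((σ y : G.edgeSet)))) ∧
    ((SimpleGraph.fromEdgeSet
        ((A.image (fun e : G.edgeSet => (e : Sym2 V)) : Finset (Sym2 V)) : Set (Sym2 V))).IsTree →
      (Matrix.of fun x y : {v : V // v ≠ x₀} => M (x : V) ((σ y : G.edgeSet))).det = 1 ∨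
      (Matrix.of fun x y : {v : V // v ≠ x₀} => M (x : V) ((σ y : G.edgeSet))).det = -1) := by
  classical
  set H : SimpleGraph V := SimpleGraph.fromEdgeSet
      ((A.image (fun e : G.edgeSet => (e : Sym2 V)) : Finset (Sym2 V)) : Set (Sym2 V)) with hH
  set N : Matrix {v : V // v ≠ x₀} {v : V // v ≠ x₀} ℝ :=
    Matrix.of fun x y : {v : V // v ≠ x₀} => M (x : V) ((σ y : G.edgeSet)) with hN
  -- basic facts
  have hne : ∀ e : G.edgeSet, head e ≠ tail e := by
    intro e
    have he : (e : Sym2 V) ∈ G.edgeSet := e.2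
    rw [hor e, SimpleGraph.mem_edgeSet] at he
    exact he.ne
  have hsumV : ∀ (f : V → ℝ) (e : G.edgeSet),
      ∑ x : V, f x * M x e = f (head e) - f (tail e) := by
    intro f e
    have hrw : ∀ x : V, f x * M x e =
        (if x = head e then f x else 0) + (if x = tail e then -(f x) else 0) := by
      intro x
      rw [hM]
      by_cases h1 : x = head e
      · subst h1
        simp [hne e]
      · by_cases h2 : x = tail e <;> simp [h1, h2, Ne.symm (hne e)]
    rw [Finset.sum_congr rfl (fun x _ => hrw x), Finset.sum_add_distrib,
      Finset.sum_ite_eq' Finset.univ (head e) f,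
      Finset.sum_ite_eq' Finset.univ (tail e) (fun x => -(f x))]
    simp [sub_eq_add_neg]
  have hsumSub : ∀ (f : V → ℝ), f x₀ = 0 → ∀ e : G.edgeSet,
      (∑ x : {v : V // v ≠ x₀}, f ↑x * M ↑x e) = f (head e) - f (tail e) := by
    intro f hf0 e
    rw [← hsumV f e]
    have h1' : ∑ x : {v : V // v ≠ x₀}, f ↑x * M ↑x e
        = ∑ x ∈ Finset.univ.erase x₀, f x * M x e :=
      (Finset.sum_subtype (p := fun v => v ≠ x₀) (Finset.univ.erase x₀) (fun x => by simp) (fun x => f x * M x e)).symm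
    rw [h1', Finset.sum_erase _ (by rw [hf0]; ring)]
  -- adjacency facts, generic over a finset of edges
  have hAdjE : ∀ (B : Finset G.edgeSet) (a b : V),
      (SimpleGraph.fromEdgeSet
        ((B.image (fun e : G.edgeSet => (e : Sym2 V)) : Finset (Sym2 V)) : Set (Sym2 V))).Adj a b →
      ∃ e ∈ B, (head e = a ∧ tail e = b) ∨ (head e = b ∧ tail e = a) := by
    intro B a b hab
    rw [SimpleGraph.fromEdgeSet_adj] at hab
    obtain ⟨hmem, hne'⟩ := hab
    rw [Finset.mem_coe, Finset.mem_image] at hmem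
    obtain ⟨e, he, hee⟩ := hmem
    rw [hor e, Sym2.eq_iff] at hee
    exact ⟨e, he, hee⟩
  have hconstB : ∀ (B : Finset G.edgeSet) (f : V → ℝ),
      (∀ e ∈ B, f (head e) = f (tail e)) → ∀ a b : V,
      (SimpleGraph.fromEdgeSet
        ((B.image (fun e : G.edgeSet => (e : Sym2 V)) : Finset (Sym2 V)) : Set (Sym2 V))).Reachable a b →
      f a = f b := by
    intro B f hf a b hr
    refine walk_const ?_ hr
    intro x y hxy
    obtain ⟨e, he, h'⟩ := hAdjE B x y hxy
    rcases h' with ⟨h1, h2⟩ | ⟨h1, h2⟩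
    · rw [← h1, ← h2]; exact hf e he
    · rw [← h1, ← h2]; exact (hf e he).symm
  -- kernel triviality, generic
  have hker : ∀ (B : Finset G.edgeSet),
      (SimpleGraph.fromEdgeSet
        ((B.image (fun e : G.edgeSet => (e : Sym2 V)) : Finset (Sym2 V)) : Set (Sym2 V))).Connected →
      ∀ v : {v : V // v ≠ x₀} → ℝ,
      (∀ e ∈ B, (∑ x : {v : V // v ≠ x₀}, v x * M ↑x e) = 0) → v = 0 := by
    intro B hconn v hv
    set f : V → ℝ := fun x => if h : x = x₀ then 0 else v ⟨x, h⟩ with hf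
    have hf0 : f x₀ = 0 := by simp [hf]
    have hfx : ∀ x : {v : V // v ≠ x₀}, f ↑x = v x := by
      intro x
      simp only [hf]
      rw [dif_neg x.2]
    have hfe : ∀ e ∈ B, f (head e) = f (tail e) := by
      intro e he
      have h2' : (∑ x : {v : V // v ≠ x₀}, f ↑x * M ↑x e) = 0 := by
        rw [Finset.sum_congr rfl (fun x _ => by rw [hfx x])]
        exact hv e he
      have h3' := hsumSub f hf0 e
      rw [h2'] at h3'
      linarith [h3']
    funext x
    have hx := hconstB B f hfe ↑x x₀ (hconn.preconnected ↑x x₀)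
    rw [hfx x, hf0] at hx
    exact hx
  have hAdjHT : ∀ e ∈ A, H.Adj (head e) (tail e) := by
    intro e he
    rw [hH, SimpleGraph.fromEdgeSet_adj]
    refine ⟨?_, hne e⟩
    rw [Finset.mem_coe, ← hor e]
    exact Finset.mem_image_of_mem _ he
  have hVne : Nonempty V := hG.nonempty
  -- forward direction
  have dirF : H.IsTree → IsUnit N := by
    intro ht
    rw [Matrix.isUnit_iff_isUnit_det, isUnit_iff_ne_zero]
    intro hdet
    rw [← Matrix.exists_vecMul_eq_zero_iff] at hdet
    obtain ⟨v, hv0, hv⟩ := hdet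
    apply hv0
    apply hker A (hH ▸ ht.isConnected) v
    intro e he
    have h1' : (Matrix.vecMul v N) (σ.symm ⟨e, he⟩) = 0 := by rw [hv]; rfl
    simpa [Matrix.vecMul, dotProduct, hN, Equiv.apply_symm_apply] using h1'
  -- backward direction
  have dirB : IsUnit N → H.IsTree := by
    intro hu
    have hdet : N.det ≠ 0 := by
      rw [Matrix.isUnit_iff_isUnit_det, isUnit_iff_ne_zero] at hu
      exact hu
    have hHconn : H.Connected := by
      rw [SimpleGraph.connected_iff]
      refine ⟨?_, hVne⟩
      by_contra hnp
      rw [SimpleGraph.Preconnected] at hnp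
      push_neg at hnp
      obtain ⟨a, b, hab⟩ := hnp
      have hone : ¬H.Reachable a x₀ ∨ ¬H.Reachable b x₀ := by
        by_contra h
        push_neg at h
        exact hab (h.1.trans h.2.symm)
      obtain ⟨c, hc⟩ : ∃ c, ¬H.Reachable c x₀ := by
        rcases hone with h | h
        exacts [⟨a, h⟩, ⟨b, h⟩]
      set f : V → ℝ := fun x => if H.Reachable x c then 1 else 0 with hf
      have hfc : ∀ x y, H.Adj x y → f x = f y := by
        intro x y h
        simp only [hf]
        by_cases hr : H.Reachable x c
        · rw [if_pos hr, if_pos (h.symm.reachable.trans hr)]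
        · rw [if_neg hr, if_neg (fun hr' => hr (h.reachable.trans hr'))]
      have hfe : ∀ e ∈ A, f (head e) = f (tail e) := fun e he => hfc _ _ (hAdjHT e he)
      have hfx0 : f x₀ = 0 := by
        rw [hf]
        exact if_neg (fun h => hc h.symm)
      have hcne : c ≠ x₀ := fun h => hc (h ▸ SimpleGraph.Reachable.refl c)
      set v : {v : V // v ≠ x₀} → ℝ := fun x => f ↑x with hv
      have hvne : v ≠ 0 := by
        intro h
        have h2' := congrFun h ⟨c, hcne⟩
        simp [hv, hf] at h2'
      have hvec : Matrix.vecMul v N = 0 := by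
        funext y
        have h2' : (Matrix.vecMul v N) y = ∑ x : {v : V // v ≠ x₀}, f ↑x * M ↑x ↑(σ y) := by
          simp [Matrix.vecMul, dotProduct, hN, hv]
        rw [h2', hsumSub f hfx0 ↑(σ y), hfe _ (σ y).2]
        simp
      exact hdet (Matrix.exists_vecMul_eq_zero_iff.mp ⟨v, hvne, hvec⟩)
    have hacyc : H.IsAcyclic := by
      rw [SimpleGraph.isAcyclic_iff_forall_adj_isBridge]
      intro a b hab
      rw [SimpleGraph.isBridge_iff]
      intro hreach
      have hab' := hab
      rw [hH, SimpleGraph.fromEdgeSet_adj] at hab'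
      obtain ⟨hmem, hne'⟩ := hab'
      rw [Finset.mem_coe, Finset.mem_image] at hmem
      obtain ⟨e₀, he₀, he₀e⟩ := hmem
      set B : Finset G.edgeSet := A.erase e₀ with hB
      set K : SimpleGraph V := SimpleGraph.fromEdgeSet
        ((B.image (fun e : G.edgeSet => (e : Sym2 V)) : Finset (Sym2 V)) : Set (Sym2 V)) with hK
      have hHK : H \ SimpleGraph.fromEdgeSet {s(a, b)} = K := by
        ext x y
        rw [SimpleGraph.sdiff_adj, hH, hK, hB, SimpleGraph.fromEdgeSet_adj,
          SimpleGraph.fromEdgeSet_adj, SimpleGraph.fromEdgeSet_adj,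
          Finset.image_erase Subtype.coe_injective, he₀e]
        simp only [Finset.mem_coe, Finset.mem_erase, Set.mem_singleton_iff]
        tauto
      have hKreach : K.Reachable a b := by rw [← hHK]; exact hreach
      have hKconn : K.Connected := by
        rw [SimpleGraph.connected_iff]
        refine ⟨?_, hVne⟩
        have step : ∀ x y : V, H.Adj x y → K.Reachable x y := by
          intro x y hxy
          by_cases hxy' : s(x, y) = s(a, b)
          · rcases Sym2.eq_iff.mp hxy' with ⟨rfl, rfl⟩ | ⟨rfl, rfl⟩
            · exact hKreach
            · exact hKreach.symm
          · apply SimpleGraph.Adj.reachable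
            rw [← hHK, SimpleGraph.sdiff_adj]
            exact ⟨hxy, fun h => hxy' ((SimpleGraph.fromEdgeSet_adj _).mp h).1⟩
        intro x y
        obtain ⟨p⟩ := hHconn.preconnected x y
        induction p with
        | nil => exact SimpleGraph.Reachable.refl _
        | cons h' p ih => exact (step _ _ h').trans ih
      have hcard : Fintype.card {v : V // v ≠ x₀} = A.card := by
        rw [Fintype.card_congr σ, Fintype.card_coe]
      have hApos : 0 < A.card := Finset.card_pos.mpr ⟨e₀, he₀⟩
      set Mat : Matrix {v : V // v ≠ x₀} ↥B ℝ :=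
        Matrix.of fun (x : {v : V // v ≠ x₀}) (e : ↥B) => M ↑x ↑e with hMat
      have hinj : Function.Injective (Matrix.vecMulLinear Mat) := by
        apply (injective_iff_map_eq_zero _).mpr
        intro v hv
        apply hker B (hK ▸ hKconn) v
        intro e he
        have h2' := congrFun hv ⟨e, he⟩
        simpa [Matrix.vecMulLinear_apply, Matrix.vecMul, dotProduct, hMat] using h2'
      have hle := LinearMap.finrank_le_finrank_of_injective hinj
      rw [Module.finrank_fintype_fun_eq_card, Module.finrank_fintype_fun_eq_card,
        hcard, Fintype.card_coe, hB, Finset.card_erase_of_mem he₀] at hle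
      omega
    exact ⟨hHconn, hacyc⟩
  -- total unimodularity of N
  have hTU : N.det = 0 ∨ N.det = 1 ∨ N.det = -1 := by
    obtain e := Fintype.equivFin {v : V // v ≠ x₀}
    rw [← Matrix.det_submatrix_equiv_self e.symm N]
    apply detTU
    · intro i j
      rw [Matrix.submatrix_apply, hN, Matrix.of_apply, hM]
      split_ifs <;> tauto
    · intro j i₁ i₂ h1' h2'
      have k : ∀ i, (N.submatrix e.symm e.symm) i j = 1 →
          ((e.symm i : {v : V // v ≠ x₀}) : V) = head ↑(σ (e.symm j)) := by
        intro i hi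
        rw [Matrix.submatrix_apply, hN, Matrix.of_apply, hM] at hi
        split_ifs at hi with ha hb
        · exact ha
        · norm_num at hi
        · norm_num at hi
      have := (k i₁ h1').trans (k i₂ h2').symm
      exact e.symm.injective (Subtype.ext this)
    · intro j i₁ i₂ h1' h2'
      have k : ∀ i, (N.submatrix e.symm e.symm) i j = -1 →
          ((e.symm i : {v : V // v ≠ x₀}) : V) = tail ↑(σ (e.symm j)) := by
        intro i hi
        rw [Matrix.submatrix_apply, hN, Matrix.of_apply, hM] at hi
        split_ifs at hi with ha hb
        · norm_num at hi
        · exact hb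
        · norm_num at hi
      have := (k i₁ h1').trans (k i₂ h2').symm
      exact e.symm.injective (Subtype.ext this)
  refine ⟨⟨dirF, dirB⟩, ?_⟩
  intro ht
  have hu := dirF ht
  have hdet : N.det ≠ 0 := by
    rw [Matrix.isUnit_iff_isUnit_det, isUnit_iff_ne_zero] at hu
    exact hu
  rcases hTU with h0' | h1' | h2'
  · exact absurd h0' hdet
  · exact Or.inl h1'
  · exact Or.inr h2'
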